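/- Let G be a graph with positive edge lengths ℓ, let h be a length bound and t a step bound, and define ℓ'(e) = ⌈t·ℓ(e)/h⌉. Then for any path p: max(|p|, t·ℓ(p)/h) ≤ ℓ'(p) ≤ |p| + t·ℓ(p)/h, where |p| is the number of edges of p and ℓ(p), ℓ'(p) are the total lengths under ℓ, ℓ'. In particular, (a) if ℓ(p) ≤ h and |p| ≤ t then ℓ'(p) ≤ 2t; and (b) if ℓ'(p) ≤ 2t then ℓ(p) ≤ 2h and |p| ≤ 2t. -/
import Mathlib


open Finset

/-- **Rounding lemma.** For positive edge lengths `ℓ`, bounds `h > 0`, `t ≥ 1`, and the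
rounded lengths `ℓ'(e) = ⌈t·ℓ(e)/h⌉`, every path `p` satisfies
`max(|p|, t·ℓ(p)/h) ≤ ℓ'(p) ≤ |p| + t·ℓ(p)/h`; in particular (a) `ℓ(p) ≤ h` and `|p| ≤ t`
imply `ℓ'(p) ≤ 2t`, and (b) `ℓ'(p) ≤ 2t` implies `ℓ(p) ≤ 2h` and `|p| ≤ 2t`. -/
theorem rounded_length_bounds {E : Type*} [DecidableEq E]
    (ℓ : E → ℝ) (h t : ℝ) (ht : 1 ≤ t) (hh : 0 < h)
    (hℓ : ∀ e, 0 < ℓ e) (p : Finset E) :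
    (max (p.card : ℝ) (t * (∑ e ∈ p, ℓ e) / h) ≤ ∑ e ∈ p, (⌈t * ℓ e / h⌉ : ℝ)) ∧
    ((∑ e ∈ p, (⌈t * ℓ e / h⌉ : ℝ)) ≤ (p.card : ℝ) + t * (∑ e ∈ p, ℓ e) / h) ∧
    (((∑ e ∈ p, ℓ e) ≤ h ∧ (p.card : ℝ) ≤ t) → (∑ e ∈ p, (⌈t * ℓ e / h⌉ : ℝ)) ≤ 2 * t) ∧
    ((∑ e ∈ p, (⌈t * ℓ e / h⌉ : ℝ)) ≤ 2 * t →
      ((∑ e ∈ p, ℓ e) ≤ 2 * h ∧ (p.card : ℝ) ≤ 2 * t)) := by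
  have hpos : ∀ e, 0 < t * ℓ e / h := fun e =>
    div_pos (mul_pos (lt_of_lt_of_le one_pos ht) (hℓ e)) hh
  have hcard : (p.card : ℝ) ≤ ∑ e ∈ p, (⌈t * ℓ e / h⌉ : ℝ) := by
    calc (p.card : ℝ) = ∑ e ∈ p, (1 : ℝ) := by simp
    _ ≤ ∑ e ∈ p, (⌈t * ℓ e / h⌉ : ℝ) := Finset.sum_le_sum fun e _ => by
        exact_mod_cast Int.one_le_ceil_iff.mpr (hpos e)
  have hlow : t * (∑ e ∈ p, ℓ e) / h ≤ ∑ e ∈ p, (⌈t * ℓ e / h⌉ : ℝ) := by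
    rw [Finset.mul_sum, Finset.sum_div]
    exact Finset.sum_le_sum fun e _ => Int.le_ceil _
  have hup : (∑ e ∈ p, (⌈t * ℓ e / h⌉ : ℝ)) ≤ (p.card : ℝ) + t * (∑ e ∈ p, ℓ e) / h := by
    rw [Finset.mul_sum, Finset.sum_div]
    calc (∑ e ∈ p, (⌈t * ℓ e / h⌉ : ℝ)) ≤ ∑ e ∈ p, (1 + t * ℓ e / h) :=
        Finset.sum_le_sum fun e _ => le_of_lt (by
          have := Int.ceil_lt_add_one (t * ℓ e / h); linarith)
    _ = (p.card : ℝ) + ∑ e ∈ p, t * ℓ e / h := by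
        rw [Finset.sum_add_distrib]; simp
  refine ⟨max_le hcard hlow, hup, ?_, ?_⟩
  · rintro ⟨h1, h2⟩
    have : t * (∑ e ∈ p, ℓ e) / h ≤ t := by
      rw [div_le_iff₀ hh]
      nlinarith [lt_of_lt_of_le one_pos ht]
    linarith
  · intro hle
    constructor
    · have := le_trans hlow hle
      rw [div_le_iff₀ hh] at this
      have htpos := lt_of_lt_of_le one_pos ht
      nlinarith
    · linarith
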